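/- Let {𝒜_k}_{k≥1} be a sequence of patterns with widths m_k ≥ 3, and let n ≥ 1. If 𝒜_1, …, 𝒜_n are labyrinth patterns, then the set 𝒲_n of white squares of level n, regarded as an m(n)-pattern with m(n) = m_1⋯m_n, is a mixed labyrinth set, i.e., it satisfies properties (1), (2) and (3) of labyrinth patterns. -/

import Mathlib

open Set

namespace Labyrinth

/-- The closed square `S_{i,j,m} = [i/m,(i+1)/m] × [j/m,(j+1)/m]` of the `m × m` grid
on the unit square, indexed by `p = (i,j)`. -/
def cell (m : ℕ) (p : ℕ × ℕ) : Set (ℝ × ℝ) :=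
  Icc ((p.1 : ℝ) / (m : ℝ)) (((p.1 : ℝ) + 1) / (m : ℝ)) ×ˢ
    Icc ((p.2 : ℝ) / (m : ℝ)) (((p.2 : ℝ) + 1) / (m : ℝ))

/-- An `m`-pattern: a nonempty set of grid indices within the `m × m` grid. -/
def IsPattern (m : ℕ) (A : Set (ℕ × ℕ)) : Prop :=
  A.Nonempty ∧ ∀ p ∈ A, p.1 < m ∧ p.2 < m

/-- Two grid squares share a side. -/
def SideAdj (p q : ℕ × ℕ) : Prop :=
  (p.1 = q.1 ∧ (p.2 + 1 = q.2 ∨ q.2 + 1 = p.2)) ∨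
  (p.2 = q.2 ∧ (p.1 + 1 = q.1 ∨ q.1 + 1 = p.1))

/-- Two grid squares share a side or a corner. -/
def CornerAdj (p q : ℕ × ℕ) : Prop :=
  SideAdj p q ∨
  ((p.1 + 1 = q.1 ∨ q.1 + 1 = p.1) ∧ (p.2 + 1 = q.2 ∨ q.2 + 1 = p.2))

/-- The graph `𝒢(𝒜)` of a pattern: vertices are its squares, two squares being
adjacent iff they share a side. -/
def patternGraph (A : Set (ℕ × ℕ)) : SimpleGraph ↥A where
  Adj p q := SideAdj p.1 q.1
  symm := ⟨by
    rintro ⟨p, hp⟩ ⟨q, hq⟩ h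
    rcases h with ⟨h1, h2⟩ | ⟨h1, h2⟩
    · exact Or.inl ⟨h1.symm, h2.symm⟩
    · exact Or.inr ⟨h1.symm, h2.symm⟩⟩
  loopless := ⟨by
    rintro ⟨p, hp⟩ h
    rcases h with ⟨h1, h2 | h2⟩ | ⟨h1, h2 | h2⟩ <;> omega⟩

/-- The four sides of a square/pattern. -/
inductive Side | top | bottom | left | right
deriving DecidableEq

/-- `p` is an exit square of the `m`-pattern `A` on the given side. -/
def IsExitSq (m : ℕ) (A : Set (ℕ × ℕ)) : Side → ℕ × ℕ → Prop
  | .top, p => p ∈ A ∧ p.2 = m - 1 ∧ (p.1, 0) ∈ A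
  | .bottom, p => p ∈ A ∧ p.2 = 0 ∧ (p.1, m - 1) ∈ A
  | .left, p => p ∈ A ∧ p.1 = 0 ∧ (m - 1, p.2) ∈ A
  | .right, p => p ∈ A ∧ p.1 = m - 1 ∧ (0, p.2) ∈ A

/-- An `m × m`-labyrinth pattern: a nonempty `m`-pattern, `m ≥ 3`, whose graph is a tree,
with exactly one vertical and exactly one horizontal exit pair, and no two white squares
at diagonally opposite corners. -/
def IsLabyrinthPattern (m : ℕ) (A : Set (ℕ × ℕ)) : Prop :=
  3 ≤ m ∧ IsPattern m A ∧ (patternGraph A).IsTree ∧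
    (∃! i : ℕ, (i, m - 1) ∈ A ∧ (i, 0) ∈ A) ∧
    (∃! j : ℕ, (0, j) ∈ A ∧ (m - 1, j) ∈ A) ∧
    ((0, 0) ∈ A → (m - 1, m - 1) ∉ A) ∧
    ((m - 1, 0) ∈ A → (0, m - 1) ∉ A)

/-- A wild labyrinth pattern: the graph is merely connected, and there is at least one
vertical and at least one horizontal exit pair. -/
def IsWildLabyrinthPattern (m : ℕ) (A : Set (ℕ × ℕ)) : Prop :=
  3 ≤ m ∧ IsPattern m A ∧ (patternGraph A).Connected ∧
    (∃ i : ℕ, (i, m - 1) ∈ A ∧ (i, 0) ∈ A) ∧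
    (∃ j : ℕ, (0, j) ∈ A ∧ (m - 1, j) ∈ A) ∧
    ((0, 0) ∈ A → (m - 1, m - 1) ∉ A) ∧
    ((m - 1, 0) ∈ A → (0, m - 1) ∉ A)

/-- One substitution step: place a copy of the pattern `A'` (of width `m'`) into each
white square of `W`. -/
def subst (m' : ℕ) (A' W : Set (ℕ × ℕ)) : Set (ℕ × ℕ) :=
  {q | ∃ p ∈ W, ∃ r ∈ A', q = (p.1 * m' + r.1, p.2 * m' + r.2)}

/-- The white squares `𝒲_n` of level `n`; `whites m A n` is the paper's `𝒲_n`, where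
`A k` is the paper's pattern `𝒜_{k+1}` of width `m k = m_{k+1}`; level `0` is the whole
unit square. -/
def whites (m : ℕ → ℕ) (A : ℕ → Set (ℕ × ℕ)) : ℕ → Set (ℕ × ℕ)
  | 0 => {(0, 0)}
  | n + 1 => subst (m n) (A n) (whites m A n)

/-- `m(n) = m_1 ⋯ m_n`. -/
def mProd (m : ℕ → ℕ) (n : ℕ) : ℕ := ∏ k ∈ Finset.range n, m k

/-- The black squares `ℬ_n` of level `n`. -/
def blacks (m : ℕ → ℕ) (A : ℕ → Set (ℕ × ℕ)) (n : ℕ) : Set (ℕ × ℕ) :=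
  {p : ℕ × ℕ | p.1 < mProd m n ∧ p.2 < mProd m n} \ whites m A n

/-- A border square of the `m × m` grid. -/
def IsBorder (m : ℕ) (p : ℕ × ℕ) : Prop :=
  p.1 = 0 ∨ p.2 = 0 ∨ p.1 = m - 1 ∨ p.2 = m - 1

/-- `L_n`, the union of the white squares of level `n`. -/
def levelSet (m : ℕ → ℕ) (A : ℕ → Set (ℕ × ℕ)) (n : ℕ) : Set (ℝ × ℝ) :=
  ⋃ p ∈ whites m A n, cell (mProd m n) p

/-- `L_∞ = ⋂_{n ≥ 1} L_n` (the term `n = 0` is the whole unit square). -/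
def limitSet (m : ℕ → ℕ) (A : ℕ → Set (ℕ × ℕ)) : Set (ℝ × ℝ) :=
  ⋂ n, levelSet m A n

def unitSquare : Set (ℝ × ℝ) := Icc (0 : ℝ) 1 ×ˢ Icc (0 : ℝ) 1

/-- A path in a graph (with adjacency `Adj`, within the vertex set `A`)
from `u` to `v`: a nonempty list of distinct, consecutively adjacent squares of `A`,
starting at `u` and ending at `v`. -/
def IsPathIn (Adj : ℕ × ℕ → ℕ × ℕ → Prop) (A : Set (ℕ × ℕ))
    (l : List (ℕ × ℕ)) (u v : ℕ × ℕ) : Prop :=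
  l ≠ [] ∧ l.Nodup ∧ l.Chain' Adj ∧ (∀ p ∈ l, p ∈ A) ∧
    l.head? = some u ∧ l.getLast? = some v

/-- `s` is an arc between `a` and `b`: a homeomorphic image of `[0,1]`
with endpoints `a` and `b`. -/
def IsArc (s : Set (ℝ × ℝ)) (a b : ℝ × ℝ) : Prop :=
  ∃ f : ℝ → ℝ × ℝ, ContinuousOn f (Icc 0 1) ∧ InjOn f (Icc 0 1) ∧
    f '' Icc 0 1 = s ∧ f 0 = a ∧ f 1 = b

/-- `e` is the exit point of `L_∞` of the given type: for every `n ≥ 1` it lies in the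
exit square of that type of `𝒲_n`. -/
def IsExitPoint (m : ℕ → ℕ) (A : ℕ → Set (ℕ × ℕ)) (s : Side) (e : ℝ × ℝ) : Prop :=
  ∀ n, 1 ≤ n → ∃ p, IsExitSq (mProd m n) (whites m A n) s p ∧ e ∈ cell (mProd m n) p

/-- The (closed) edge of the grid square `p` of the `m × m` grid on the given side. -/
def cellEdge (m : ℕ) (p : ℕ × ℕ) : Side → Set (ℝ × ℝ)
  | .top => Icc ((p.1 : ℝ) / (m : ℝ)) (((p.1 : ℝ) + 1) / (m : ℝ)) ×ˢ {((p.2 : ℝ) + 1) / (m : ℝ)}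
  | .bottom => Icc ((p.1 : ℝ) / (m : ℝ)) (((p.1 : ℝ) + 1) / (m : ℝ)) ×ˢ {(p.2 : ℝ) / (m : ℝ)}
  | .left => {(p.1 : ℝ) / (m : ℝ)} ×ˢ Icc ((p.2 : ℝ) / (m : ℝ)) (((p.2 : ℝ) + 1) / (m : ℝ))
  | .right => {((p.1 : ℝ) + 1) / (m : ℝ)} ×ˢ Icc ((p.2 : ℝ) / (m : ℝ)) (((p.2 : ℝ) + 1) / (m : ℝ))

/-- Directions in the grid. -/
inductive Dir | up | down | left | right
deriving DecidableEq

/-- `stepDir p q d`: the square `q` is the neighbour of `p` in direction `d`. -/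
def stepDir (p q : ℕ × ℕ) : Dir → Prop
  | .up => q.1 = p.1 ∧ q.2 = p.2 + 1
  | .down => q.1 = p.1 ∧ p.2 = q.2 + 1
  | .left => q.2 = p.2 ∧ p.1 = q.1 + 1
  | .right => q.2 = p.2 ∧ q.1 = p.1 + 1

/-- The outward direction through a given side. -/
def outDir : Side → Dir
  | .top => .up
  | .bottom => .down
  | .left => .left
  | .right => .right

def sideOfDir : Dir → Side
  | .up => .top
  | .down => .bottom
  | .left => .left
  | .right => .right

/-- The six types `A, B, C, D, E, F` of paths (and of squares within a path). -/
inductive PTy | A | B | C | D | E | F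
deriving DecidableEq

instance : Fintype PTy where
  elems := {.A, .B, .C, .D, .E, .F}
  complete := by intro x; cases x <;> decide

/-- The exit at which the `x`-path starts: `A`: top→bottom, `B`: left→right,
`C`: top→right, `D`: right→bottom, `E`: bottom→left, `F`: left→top. -/
def startSide : PTy → Side
  | .A => .top
  | .B => .left
  | .C => .top
  | .D => .right
  | .E => .bottom
  | .F => .left

/-- The exit at which the `x`-path ends. -/
def endSide : PTy → Side
  | .A => .bottom
  | .B => .right
  | .C => .right
  | .D => .bottom
  | .E => .left
  | .F => .top

/-- The two neighbour directions characterising a square of each type. -/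
def ptyDirPair : PTy → Dir × Dir
  | .A => (.up, .down)
  | .B => (.left, .right)
  | .C => (.up, .right)
  | .D => (.right, .down)
  | .E => (.down, .left)
  | .F => (.left, .up)

def ptyDirs (τ : PTy) : Set Dir := {(ptyDirPair τ).1, (ptyDirPair τ).2}

/-- The set of directions from the `i`-th square of the path `l` towards its neighbours
within the path, where the first and last squares (exit squares) are regarded as having
an additional neighbour outside the unit square, in directions `dstart`, `dend`
respectively. -/
def pathDirs (l : List (ℕ × ℕ)) (dstart dend : Dir) (i : ℕ) : Set Dir :=
  {d | (∃ p q, l[i]? = some p ∧ l[i - 1]? = some q ∧ 0 < i ∧ stepDir p q d)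
    ∨ (∃ p q, l[i]? = some p ∧ l[i + 1]? = some q ∧ stepDir p q d)
    ∨ (i = 0 ∧ d = dstart)
    ∨ (i + 1 = l.length ∧ d = dend)}

/-- The number of `τ`-squares of the path `l` (with outward exit directions
`dstart`, `dend`). -/
noncomputable def countTy (l : List (ℕ × ℕ)) (dstart dend : Dir) (τ : PTy) : ℕ :=
  {i | i < l.length ∧ pathDirs l dstart dend i = ptyDirs τ}.ncard

/-- `M(n) = M_1 ⋅ M_2 ⋅ ⋯ ⋅ M_n`. -/
def matProd (M : ℕ → Matrix PTy PTy ℕ) (n : ℕ) : Matrix PTy PTy ℕ :=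
  ((List.range n).map M).prod

/-- A simple closed curve: a subspace homeomorphic to the circle. -/
def IsSimpleClosedCurve (s : Set (ℝ × ℝ)) : Prop :=
  Nonempty (↥s ≃ₜ AddCircle (1 : ℝ))

/-- The number of `δ`-mesh squares meeting `E`. -/
noncomputable def meshCount (δ : ℝ) (E : Set (ℝ × ℝ)) : ℕ :=
  {q : ℤ × ℤ | (E ∩ (Icc ((q.1 : ℝ) * δ) (((q.1 : ℝ) + 1) * δ) ×ˢ
      Icc ((q.2 : ℝ) * δ) (((q.2 : ℝ) + 1) * δ))).Nonempty}.ncard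

/-- The lower box-counting dimension of `E ⊆ ℝ²`. -/
noncomputable def lowerBoxDim (E : Set (ℝ × ℝ)) : ℝ :=
  Filter.liminf (fun δ : ℝ => Real.log (meshCount δ E) / (-Real.log δ)) (nhdsWithin 0 (Ioi 0))

/-- The upper box-counting dimension of `E ⊆ ℝ²`. -/
noncomputable def upperBoxDim (E : Set (ℝ × ℝ)) : ℝ :=
  Filter.limsup (fun δ : ℝ => Real.log (meshCount δ E) / (-Real.log δ)) (nhdsWithin 0 (Ioi 0))

/-! ### Auxiliary lemmas for the proof -/

section Aux

open SimpleGraph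

variable {V : Type*}

/-- Induction along walks. -/
lemma walk_ind {G : SimpleGraph V} (P : V → Prop)
    (step : ∀ a b, G.Adj a b → P a → P b) :
    ∀ {u v : V}, G.Walk u v → P u → P v := by
  intro u v w
  induction w with
  | nil => exact id
  | cons h _ ih => exact fun hu => ih (step _ _ h hu)

lemma reach_ind {G : SimpleGraph V} (P : V → Prop)
    (step : ∀ a b, G.Adj a b → P a → P b) {u v : V}
    (h : G.Reachable u v) : P u → P v := by
  obtain ⟨w⟩ := h; exact walk_ind P step w

/-- An edge across which some invariant changes, while it is constant across all
other edges, is a bridge. -/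
lemma isBridge_of_invariant {G : SimpleGraph V} {u v : V} (h : G.Adj u v)
    (f : V → Prop) (hf : ∀ a b, G.Adj a b → s(a, b) ≠ s(u, v) → (f a ↔ f b))
    (hu : f u) (hv : ¬ f v) : G.IsBridge s(u, v) := by
  rw [isBridge_iff]
  refine fun (hr : (G \ fromEdgeSet {s(u, v)}).Reachable u v) => hv ?_
  refine reach_ind f (fun a b hab ha => ?_) hr hu
  rw [sdiff_adj, fromEdgeSet_adj] at hab
  have hne : s(a, b) ≠ s(u, v) := by
    intro hh; exact (hab.2 ⟨hh, hab.1.ne⟩)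
  exact (hf a b hab.1 hne).mp ha

/-- In an acyclic graph, removing the edge `s(u,v)` makes `v` unreachable from `u`. -/
lemma acyclic_not_reach_delete {G : SimpleGraph V} (hG : G.IsAcyclic)
    {u v : V} (h : G.Adj u v) : ¬(G \ fromEdgeSet {s(u, v)}).Reachable u v :=
  (isBridge_iff).mp ((isAcyclic_iff_forall_adj_isBridge).mp hG h)

/-- Removing an edge from a connected graph leaves every vertex reachable from one
of the two endpoints. -/
lemma reach_of_delete_edge {G : SimpleGraph V} (hG : G.Preconnected)
    {u v : V} (h : G.Adj u v) (s : V) :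
    (G \ fromEdgeSet {s(u, v)}).Reachable u s ∨ (G \ fromEdgeSet {s(u, v)}).Reachable v s := by
  refine reach_ind (fun s => (G \ fromEdgeSet {s(u, v)}).Reachable u s ∨
      (G \ fromEdgeSet {s(u, v)}).Reachable v s) ?_ (hG u s) (Or.inl (Reachable.refl u))
  intro a b hab hP
  by_cases he : s(a, b) = s(u, v)
  · rw [Sym2.eq_iff] at he
    rcases he with ⟨rfl, rfl⟩ | ⟨rfl, rfl⟩
    · exact Or.inr (Reachable.refl _)
    · exact Or.inl (Reachable.refl _)
  · have hab' : (G \ fromEdgeSet {s(u, v)}).Adj a b := by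
      rw [sdiff_adj, fromEdgeSet_adj]
      exact ⟨hab, fun hh => he hh.1⟩
    rcases hP with hP | hP
    · exact Or.inl (hP.trans hab'.reachable)
    · exact Or.inr (hP.trans hab'.reachable)

/-- The graph `G` with all edges at the vertex `p` removed. -/
def avoidVtx (G : SimpleGraph V) (p : V) : SimpleGraph V where
  Adj a b := G.Adj a b ∧ a ≠ p ∧ b ≠ p
  symm := ⟨fun a b h => ⟨h.1.symm, h.2.2, h.2.1⟩⟩
  loopless := ⟨fun a h => G.loopless.irrefl a h.1⟩

lemma avoidVtx_le (G : SimpleGraph V) (p : V) : avoidVtx G p ≤ G := fun _ _ h => h.1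

/-- In an acyclic graph, two neighbours of `p` that are connected avoiding `p`
are equal. -/
lemma unique_attach {G : SimpleGraph V} (hG : G.IsAcyclic) {p a b : V}
    (ha : G.Adj a p) (hb : G.Adj b p) (hr : (avoidVtx G p).Reachable a b) : a = b := by
  by_contra hne
  apply acyclic_not_reach_delete hG ha
  have h1 : (G \ fromEdgeSet {s(a, p)}).Reachable a b := by
    refine hr.mono (fun x y hxy => ?_)
    rw [sdiff_adj, fromEdgeSet_adj]
    refine ⟨hxy.1, fun hh => ?_⟩
    have := hh.1
    rw [Set.mem_singleton_iff, Sym2.eq_iff] at this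
    rcases this with ⟨rfl, rfl⟩ | ⟨rfl, rfl⟩
    · exact hxy.2.2 rfl
    · exact hxy.2.1 rfl
  refine h1.trans (Adj.reachable ?_)
  rw [sdiff_adj, fromEdgeSet_adj]
  refine ⟨hb, fun hh => ?_⟩
  have := hh.1
  rw [Set.mem_singleton_iff, Sym2.eq_iff] at this
  rcases this with ⟨h1', h2'⟩ | ⟨h1', h2'⟩
  · exact hne h1'.symm
  · exact G.loopless.irrefl p (h1' ▸ hb)

/-- Block arithmetic: decomposition into blocks of size `m` is unique. -/
lemma blockL1 {m a b c d : ℕ} (hm : 0 < m) (hb : b < m) (hd : d < m) :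
    a * m + b = c * m + d ↔ a = c ∧ b = d := by
  constructor
  · intro h
    have h1 : (a * m + b) / m = a := by
      rw [mul_comm, Nat.mul_add_div hm, Nat.div_eq_of_lt hb, add_zero]
    have h2 : (c * m + d) / m = c := by
      rw [mul_comm, Nat.mul_add_div hm, Nat.div_eq_of_lt hd, add_zero]
    have hac : a = c := by rw [← h1, ← h2, h]
    subst hac
    exact ⟨rfl, by omega⟩
  · rintro ⟨rfl, rfl⟩; rfl

lemma blockL2 {m a b c d : ℕ} (hm : 0 < m) (hb : b < m) (hd : d < m) :
    a * m + b + 1 = c * m + d ↔ (a = c ∧ b + 1 = d) ∨ (c = a + 1 ∧ b = m - 1 ∧ d = 0) := by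
  constructor
  · intro h
    by_cases hbm : b + 1 < m
    · left
      have := (blockL1 hm hbm hd).mp (by rw [← add_assoc]; exact h)
      exact ⟨this.1, this.2⟩
    · right
      have hb1 : b = m - 1 := by omega
      have : (a + 1) * m + 0 = c * m + d := by
        rw [add_mul, one_mul]; omega
      have := (blockL1 hm hm hd).mp this
      omega
  · rintro (⟨rfl, rfl⟩ | ⟨rfl, h1, rfl⟩)
    · rfl
    · subst h1; rw [add_mul, one_mul]; omega

end Aux

section Subst

/-- Placing the square `r` inside the white square `p`. -/
def phi (m' : ℕ) (p r : ℕ × ℕ) : ℕ × ℕ := (p.1 * m' + r.1, p.2 * m' + r.2)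

variable {m' : ℕ} {A' W : Set (ℕ × ℕ)}

lemma phi_mem_subst {p r : ℕ × ℕ} (hp : p ∈ W) (hr : r ∈ A') :
    phi m' p r ∈ subst m' A' W := ⟨p, hp, r, hr, rfl⟩

lemma subst_decomp (hm : 0 < m') (hA : ∀ r ∈ A', r.1 < m' ∧ r.2 < m') {q : ℕ × ℕ}
    (hq : q ∈ subst m' A' W) :
    ∃ p r, p ∈ W ∧ r ∈ A' ∧ q = phi m' p r ∧
      p = (q.1 / m', q.2 / m') ∧ r = (q.1 % m', q.2 % m') := by
  obtain ⟨p, hp, r, hr, rfl⟩ := hq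
  obtain ⟨hr1, hr2⟩ := hA r hr
  refine ⟨p, r, hp, hr, rfl, ?_, ?_⟩
  · have e1 : (p.1 * m' + r.1) / m' = p.1 := by
      rw [mul_comm, Nat.mul_add_div hm, Nat.div_eq_of_lt hr1, add_zero]
    have e2 : (p.2 * m' + r.2) / m' = p.2 := by
      rw [mul_comm, Nat.mul_add_div hm, Nat.div_eq_of_lt hr2, add_zero]
    simp [phi, e1, e2]
  · have e1 : (p.1 * m' + r.1) % m' = r.1 := by
      rw [mul_comm, Nat.mul_add_mod, Nat.mod_eq_of_lt hr1]
    have e2 : (p.2 * m' + r.2) % m' = r.2 := by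
      rw [mul_comm, Nat.mul_add_mod, Nat.mod_eq_of_lt hr2]
    simp [phi, e1, e2]

lemma phi_inj (hm : 0 < m') {p p' r r' : ℕ × ℕ}
    (h1 : r.1 < m') (h2 : r.2 < m') (h1' : r'.1 < m') (h2' : r'.2 < m')
    (h : phi m' p r = phi m' p' r') : p = p' ∧ r = r' := by
  unfold phi at h
  rw [Prod.ext_iff] at h
  obtain ⟨ha, hb⟩ := h
  dsimp at ha hb
  have e1 := (blockL1 hm h1 h1').mp ha
  have e2 := (blockL1 hm h2 h2').mp hb
  exact ⟨Prod.ext e1.1 e2.1, Prod.ext e1.2 e2.2⟩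

/-- The key adjacency characterization for substituted patterns. -/
lemma sideAdj_phi_iff (hm : 0 < m') {p p' r r' : ℕ × ℕ}
    (h1 : r.1 < m') (h2 : r.2 < m') (h1' : r'.1 < m') (h2' : r'.2 < m') :
    SideAdj (phi m' p r) (phi m' p' r') ↔
      (p = p' ∧ SideAdj r r') ∨
      (p'.1 = p.1 ∧ p'.2 = p.2 + 1 ∧ r.1 = r'.1 ∧ r.2 = m' - 1 ∧ r'.2 = 0) ∨
      (p'.1 = p.1 ∧ p.2 = p'.2 + 1 ∧ r.1 = r'.1 ∧ r.2 = 0 ∧ r'.2 = m' - 1) ∨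
      (p'.2 = p.2 ∧ p'.1 = p.1 + 1 ∧ r.2 = r'.2 ∧ r.1 = m' - 1 ∧ r'.1 = 0) ∨
      (p'.2 = p.2 ∧ p.1 = p'.1 + 1 ∧ r.2 = r'.2 ∧ r.1 = 0 ∧ r'.1 = m' - 1) := by
  dsimp only [phi, SideAdj]
  constructor
  · rintro (⟨ha, hb | hb⟩ | ⟨ha, hb | hb⟩)
    · obtain ⟨e1, e2⟩ := (blockL1 hm h1 h1').mp ha
      rcases (blockL2 hm h2 h2').mp hb with ⟨f1, f2⟩ | ⟨f1, f2, f3⟩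
      · exact Or.inl ⟨Prod.ext e1 f1, Or.inl ⟨e2, Or.inl f2⟩⟩
      · exact Or.inr (Or.inl ⟨e1.symm, f1, e2, f2, f3⟩)
    · obtain ⟨e1, e2⟩ := (blockL1 hm h1 h1').mp ha
      rcases (blockL2 hm h2' h2).mp hb with ⟨f1, f2⟩ | ⟨f1, f2, f3⟩
      · exact Or.inl ⟨Prod.ext e1 f1.symm, Or.inl ⟨e2, Or.inr f2⟩⟩
      · exact Or.inr (Or.inr (Or.inl ⟨e1.symm, f1, e2, f3, f2⟩))
    · obtain ⟨e1, e2⟩ := (blockL1 hm h2 h2').mp ha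
      rcases (blockL2 hm h1 h1').mp hb with ⟨f1, f2⟩ | ⟨f1, f2, f3⟩
      · exact Or.inl ⟨Prod.ext f1 e1, Or.inr ⟨e2, Or.inl f2⟩⟩
      · exact Or.inr (Or.inr (Or.inr (Or.inl ⟨e1.symm, f1, e2, f2, f3⟩)))
    · obtain ⟨e1, e2⟩ := (blockL1 hm h2 h2').mp ha
      rcases (blockL2 hm h1' h1).mp hb with ⟨f1, f2⟩ | ⟨f1, f2, f3⟩
      · exact Or.inl ⟨Prod.ext f1.symm e1, Or.inr ⟨e2, Or.inr f2⟩⟩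
      · exact Or.inr (Or.inr (Or.inr (Or.inr ⟨e1.symm, f1, e2, f3, f2⟩)))
  · rintro (⟨rfl, hs⟩ | ⟨e1, e2, e3, e4, e5⟩ | ⟨e1, e2, e3, e4, e5⟩ |
      ⟨e1, e2, e3, e4, e5⟩ | ⟨e1, e2, e3, e4, e5⟩)
    · rcases hs with ⟨f1, f2 | f2⟩ | ⟨f1, f2 | f2⟩
      · exact Or.inl ⟨by rw [f1], Or.inl (by omega)⟩
      · exact Or.inl ⟨by rw [f1], Or.inr (by omega)⟩
      · exact Or.inr ⟨by rw [f1], Or.inl (by omega)⟩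
      · exact Or.inr ⟨by rw [f1], Or.inr (by omega)⟩
    · exact Or.inl ⟨by rw [e1, e3], Or.inl ((blockL2 hm h2 h2').mpr (Or.inr ⟨e2, e4, e5⟩))⟩
    · exact Or.inl ⟨by rw [e1, e3], Or.inr ((blockL2 hm h2' h2).mpr (Or.inr ⟨e2, e5, e4⟩))⟩
    · exact Or.inr ⟨by rw [e1, e3], Or.inl ((blockL2 hm h1 h1').mpr (Or.inr ⟨e2, e4, e5⟩))⟩
    · exact Or.inr ⟨by rw [e1, e3], Or.inr ((blockL2 hm h1' h1).mpr (Or.inr ⟨e2, e5, e4⟩))⟩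

lemma sideAdj_symm {p q : ℕ × ℕ} (h : SideAdj p q) : SideAdj q p := by
  unfold SideAdj at *; omega

lemma sideAdj_ne {p q : ℕ × ℕ} (h : SideAdj p q) : p ≠ q := by
  intro hh; subst hh; unfold SideAdj at h; omega

lemma sideAdj_lift {p r r' : ℕ × ℕ} (h : SideAdj r r') :
    SideAdj (phi m' p r) (phi m' p r') := by
  unfold SideAdj phi at *; dsimp; omega

/-- The block of `q`. -/
def pQ (m' : ℕ) (q : ℕ × ℕ) : ℕ × ℕ := (q.1 / m', q.2 / m')

/-- The position of `q` within its block. -/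
def rQ (m' : ℕ) (q : ℕ × ℕ) : ℕ × ℕ := (q.1 % m', q.2 % m')

lemma pQ_phi (hm : 0 < m') {p r : ℕ × ℕ} (h1 : r.1 < m') (h2 : r.2 < m') :
    pQ m' (phi m' p r) = p := by
  unfold pQ phi; dsimp
  rw [mul_comm p.1, Nat.mul_add_div hm, Nat.div_eq_of_lt h1, add_zero,
      mul_comm p.2, Nat.mul_add_div hm, Nat.div_eq_of_lt h2, add_zero]

lemma rQ_phi (hm : 0 < m') {p r : ℕ × ℕ} (h1 : r.1 < m') (h2 : r.2 < m') :
    rQ m' (phi m' p r) = r := by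
  unfold rQ phi; dsimp
  rw [mul_comm p.1, Nat.mul_add_mod, Nat.mod_eq_of_lt h1,
      mul_comm p.2, Nat.mul_add_mod, Nat.mod_eq_of_lt h2]

/-- The four possible relative positions of squares of a crossing edge. -/
def CrossData (m' : ℕ) (p p' r r' : ℕ × ℕ) : Prop :=
  (p'.1 = p.1 ∧ p'.2 = p.2 + 1 ∧ r.1 = r'.1 ∧ r.2 = m' - 1 ∧ r'.2 = 0) ∨
  (p'.1 = p.1 ∧ p.2 = p'.2 + 1 ∧ r.1 = r'.1 ∧ r.2 = 0 ∧ r'.2 = m' - 1) ∨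
  (p'.2 = p.2 ∧ p'.1 = p.1 + 1 ∧ r.2 = r'.2 ∧ r.1 = m' - 1 ∧ r'.1 = 0) ∨
  (p'.2 = p.2 ∧ p.1 = p'.1 + 1 ∧ r.2 = r'.2 ∧ r.1 = 0 ∧ r'.1 = m' - 1)

lemma sideAdj_phi_iff' (hm : 0 < m') {p p' r r' : ℕ × ℕ}
    (h1 : r.1 < m') (h2 : r.2 < m') (h1' : r'.1 < m') (h2' : r'.2 < m') :
    SideAdj (phi m' p r) (phi m' p' r') ↔
      (p = p' ∧ SideAdj r r') ∨ CrossData m' p p' r r' := by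
  unfold CrossData
  exact sideAdj_phi_iff hm h1 h2 h1' h2'

/-- The square of the copy at `c` at which the copy at `p₁` is attached. -/
def entrySq (m' iV jH : ℕ) (c p₁ : ℕ × ℕ) : ℕ × ℕ :=
  if p₁.1 = c.1 + 1 then (m' - 1, jH)
  else if c.1 = p₁.1 + 1 then (0, jH)
  else if p₁.2 = c.2 + 1 then (iV, m' - 1)
  else (iV, 0)

lemma entrySq_mem {iV jH : ℕ}
    (hv1 : (iV, m' - 1) ∈ A') (hv0 : (iV, 0) ∈ A')
    (hh0 : (0, jH) ∈ A') (hh1 : (m' - 1, jH) ∈ A') (c p₁ : ℕ × ℕ) :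
    entrySq m' iV jH c p₁ ∈ A' := by
  unfold entrySq; split_ifs <;> assumption

/-- A crossing edge always uses the unique exit squares of the inner pattern, and
joins adjacent blocks. -/
lemma cross_entry {iV jH : ℕ}
    (hiVu : ∀ i, (i, m' - 1) ∈ A' ∧ (i, 0) ∈ A' → i = iV)
    (hjHu : ∀ j, (0, j) ∈ A' ∧ (m' - 1, j) ∈ A' → j = jH)
    {pa pb ra rb : ℕ × ℕ} (hra : ra ∈ A') (hrb : rb ∈ A')
    (hc : CrossData m' pa pb ra rb) :
    SideAdj pa pb ∧ ra = entrySq m' iV jH pa pb ∧ rb = entrySq m' iV jH pb pa := by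
  have hra' : ra = (ra.1, ra.2) := rfl
  have hrb' : rb = (rb.1, rb.2) := rfl
  rcases hc with ⟨e1, e2, e3, e4, e5⟩ | ⟨e1, e2, e3, e4, e5⟩ |
    ⟨e1, e2, e3, e4, e5⟩ | ⟨e1, e2, e3, e4, e5⟩
  · have hmem1 : (ra.1, m' - 1) ∈ A' := by rw [← e4]; rw [← hra']; exact hra
    have hmem2 : (ra.1, 0) ∈ A' := by rw [← e5, e3, ← hrb']; exact hrb
    have hiv : ra.1 = iV := hiVu _ ⟨hmem1, hmem2⟩
    refine ⟨Or.inl ⟨e1.symm, Or.inl e2.symm⟩, ?_, ?_⟩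
    · rw [entrySq, if_neg (by omega), if_neg (by omega), if_pos e2]
      rw [hra', hiv, e4]
    · rw [entrySq, if_neg (by omega), if_neg (by omega), if_neg (by omega)]
      rw [hrb', ← e3, hiv, e5]
  · have hmem1 : (ra.1, m' - 1) ∈ A' := by rw [← e5, e3, ← hrb']; exact hrb
    have hmem2 : (ra.1, 0) ∈ A' := by rw [← e4, ← hra']; exact hra
    have hiv : ra.1 = iV := hiVu _ ⟨hmem1, hmem2⟩
    refine ⟨Or.inl ⟨e1.symm, Or.inr e2.symm⟩, ?_, ?_⟩
    · rw [entrySq, if_neg (by omega), if_neg (by omega), if_neg (by omega)]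
      rw [hra', hiv, e4]
    · rw [entrySq, if_neg (by omega), if_neg (by omega), if_pos e2]
      rw [hrb', ← e3, hiv, e5]
  · have hmem1 : (0, ra.2) ∈ A' := by rw [← e5, e3, ← hrb']; exact hrb
    have hmem2 : (m' - 1, ra.2) ∈ A' := by rw [← e4, ← hra']; exact hra
    have hjh : ra.2 = jH := hjHu _ ⟨hmem1, hmem2⟩
    refine ⟨Or.inr ⟨e1.symm, Or.inl e2.symm⟩, ?_, ?_⟩
    · rw [entrySq, if_pos e2]
      rw [hra', hjh, e4]
    · rw [entrySq, if_neg (by omega), if_pos (by omega)]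
      rw [hrb', ← e3, hjh, e5]
  · have hmem1 : (0, ra.2) ∈ A' := by rw [← e4, ← hra']; exact hra
    have hmem2 : (m' - 1, ra.2) ∈ A' := by rw [← e5, e3, ← hrb']; exact hrb
    have hjh : ra.2 = jH := hjHu _ ⟨hmem1, hmem2⟩
    refine ⟨Or.inr ⟨e1.symm, Or.inr e2.symm⟩, ?_, ?_⟩
    · rw [entrySq, if_neg (by omega), if_pos e2]
      rw [hra', hjh, e4]
    · rw [entrySq, if_pos (by omega)]
      rw [hrb', ← e3, hjh, e5]

lemma crossData_ne {pa pb ra rb : ℕ × ℕ} (hc : CrossData m' pa pb ra rb) : pa ≠ pb := by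
  intro h; subst h
  rcases hc with ⟨e1, e2, _⟩ | ⟨e1, e2, _⟩ | ⟨e1, e2, _⟩ | ⟨e1, e2, _⟩ <;> omega

open SimpleGraph in
lemma reach_in_copy (hm : 0 < m') (hA : ∀ r ∈ A', r.1 < m' ∧ r.2 < m')
    (hconn : (patternGraph A').Preconnected) {p r r' : ℕ × ℕ}
    (hp : p ∈ W) (hr : r ∈ A') (hr' : r' ∈ A') :
    (patternGraph (subst m' A' W)).Reachable ⟨phi m' p r, phi_mem_subst hp hr⟩
      ⟨phi m' p r', phi_mem_subst hp hr'⟩ := by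
  refine reach_ind
    (fun s : ↥A' => (patternGraph (subst m' A' W)).Reachable
      ⟨phi m' p r, phi_mem_subst hp hr⟩ ⟨phi m' p s.1, phi_mem_subst hp s.2⟩)
    ?_ (hconn ⟨r, hr⟩ ⟨r', hr'⟩) (Reachable.refl _)
  intro a b hab hPa
  exact hPa.trans (SimpleGraph.Adj.reachable (sideAdj_lift hab))

lemma cross_adj (hm : 0 < m') {iV jH : ℕ}
    (hv1 : (iV, m' - 1) ∈ A') (hv0 : (iV, 0) ∈ A')
    (hh0 : (0, jH) ∈ A') (hh1 : (m' - 1, jH) ∈ A')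
    {p p' : ℕ × ℕ} (h : SideAdj p p') :
    ∃ a ∈ A', ∃ b ∈ A', SideAdj (phi m' p a) (phi m' p' b) := by
  rcases h with ⟨h1, h2 | h2⟩ | ⟨h1, h2 | h2⟩
  · refine ⟨(iV, m' - 1), hv1, (iV, 0), hv0,
      Or.inl ⟨by dsimp [phi]; rw [h1], Or.inl ?_⟩⟩
    dsimp [phi]
    rw [← h2, add_one_mul]
    omega
  · refine ⟨(iV, 0), hv0, (iV, m' - 1), hv1,
      Or.inl ⟨by dsimp [phi]; rw [h1], Or.inr ?_⟩⟩
    dsimp [phi]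
    rw [← h2, add_one_mul]
    omega
  · refine ⟨(m' - 1, jH), hh1, (0, jH), hh0,
      Or.inr ⟨by dsimp [phi]; rw [h1], Or.inl ?_⟩⟩
    dsimp [phi]
    rw [← h2, add_one_mul]
    omega
  · refine ⟨(0, jH), hh0, (m' - 1, jH), hh1,
      Or.inr ⟨by dsimp [phi]; rw [h1], Or.inr ?_⟩⟩
    dsimp [phi]
    rw [← h2, add_one_mul]
    omega

open SimpleGraph in
lemma subst_connected (hm : 0 < m') (hA : ∀ r ∈ A', r.1 < m' ∧ r.2 < m')
    {iV jH : ℕ} (hv1 : (iV, m' - 1) ∈ A') (hv0 : (iV, 0) ∈ A')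
    (hh0 : (0, jH) ∈ A') (hh1 : (m' - 1, jH) ∈ A')
    (hconnA : (patternGraph A').Connected) (hconnW : (patternGraph W).Connected) :
    (patternGraph (subst m' A' W)).Connected := by
  rw [connected_iff]
  constructor
  · intro x y
    obtain ⟨p, r, hp, hr, hx, -, -⟩ := subst_decomp hm hA x.2
    obtain ⟨p', r', hp', hr', hy, -, -⟩ := subst_decomp hm hA y.2
    have hx' : x = ⟨phi m' p r, phi_mem_subst hp hr⟩ := Subtype.ext hx
    have hy' : y = ⟨phi m' p' r', phi_mem_subst hp' hr'⟩ := Subtype.ext hy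
    rw [hx', hy']
    have key : ∀ (pv : ↥W) (rv : ℕ × ℕ) (hrv : rv ∈ A'),
        (patternGraph (subst m' A' W)).Reachable ⟨phi m' p r, phi_mem_subst hp hr⟩
          ⟨phi m' pv.1 rv, phi_mem_subst pv.2 hrv⟩ := by
      intro pv
      refine reach_ind
        (fun pw : ↥W => ∀ rv (hrv : rv ∈ A'),
          (patternGraph (subst m' A' W)).Reachable ⟨phi m' p r, phi_mem_subst hp hr⟩
            ⟨phi m' pw.1 rv, phi_mem_subst pw.2 hrv⟩)
        ?_ (hconnW.preconnected ⟨p, hp⟩ pv) ?_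
      · intro a b hab hPa rv hrv
        obtain ⟨ca, hca, cb, hcb, hadj⟩ := cross_adj hm hv1 hv0 hh0 hh1 hab
        have hadj' : (patternGraph (subst m' A' W)).Adj
            ⟨phi m' a.1 ca, phi_mem_subst a.2 hca⟩
            ⟨phi m' b.1 cb, phi_mem_subst b.2 hcb⟩ := hadj
        exact ((hPa ca hca).trans (SimpleGraph.Adj.reachable hadj')).trans
          (reach_in_copy hm hA hconnA.preconnected b.2 hcb hrv)
      · intro rv hrv
        exact reach_in_copy hm hA hconnA.preconnected hp hr hrv
    exact key ⟨p', hp'⟩ r' hr'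
  · obtain ⟨p⟩ := hconnW.nonempty
    exact ⟨⟨phi m' p.1 (iV, 0), phi_mem_subst p.2 hv0⟩⟩

lemma pQ_eq (hm : 0 < m') {q px rx : ℕ × ℕ} (hx : q = phi m' px rx)
    (b1 : rx.1 < m') (b2 : rx.2 < m') : pQ m' q = px := by
  rw [hx]; exact pQ_phi hm b1 b2

lemma rQ_eq (hm : 0 < m') {q px rx : ℕ × ℕ} (hx : q = phi m' px rx)
    (b1 : rx.1 < m') (b2 : rx.2 < m') : rQ m' q = rx := by
  rw [hx]; exact rQ_phi hm b1 b2

/-- The invariant used to show that an edge inside one copy is a bridge. -/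
def IBody (A' W : Set (ℕ × ℕ)) (G' : SimpleGraph ↥A') (rA : ↥A') (ent : ℕ × ℕ → ℕ × ℕ)
    (GV : SimpleGraph ↥W) (pu pa ra : ℕ × ℕ) : Prop :=
  (pa = pu ∧ ∃ hra : ra ∈ A', G'.Reachable rA ⟨ra, hra⟩) ∨
  (pa ≠ pu ∧ ∃ p₁, ∃ (hpa : pa ∈ W) (hp1 : p₁ ∈ W) (hent : ent p₁ ∈ A'),
     SideAdj p₁ pu ∧ GV.Reachable ⟨pa, hpa⟩ ⟨p₁, hp1⟩ ∧ G'.Reachable rA ⟨ent p₁, hent⟩)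

/-- The invariant used to show that a crossing edge is a bridge. -/
def XBody (W : Set (ℕ × ℕ)) (G' : SimpleGraph ↥W) (Pu : ↥W) (pa : ℕ × ℕ) : Prop :=
  ∃ hpa : pa ∈ W, G'.Reachable ⟨pa, hpa⟩ Pu

open SimpleGraph in
lemma subst_acyclic (hm : 0 < m') (hA : ∀ r ∈ A', r.1 < m' ∧ r.2 < m')
    {iV jH : ℕ}
    (hiVu : ∀ i, (i, m' - 1) ∈ A' ∧ (i, 0) ∈ A' → i = iV)
    (hjHu : ∀ j, (0, j) ∈ A' ∧ (m' - 1, j) ∈ A' → j = jH)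
    (hAac : (patternGraph A').IsAcyclic)
    (hWac : (patternGraph W).IsAcyclic) :
    (patternGraph (subst m' A' W)).IsAcyclic := by
  rw [isAcyclic_iff_forall_adj_isBridge]
  intro u v huv
  obtain ⟨pu, ru, hpu, hru, hu1, -, -⟩ := subst_decomp hm hA u.2
  obtain ⟨pv, rv, hpv, hrv, hv1, -, -⟩ := subst_decomp hm hA v.2
  obtain ⟨hru1, hru2⟩ := hA ru hru
  obtain ⟨hrv1, hrv2⟩ := hA rv hrv
  have huv' : SideAdj (phi m' pu ru) (phi m' pv rv) := by
    rw [← hu1, ← hv1]; exact huv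
  rw [sideAdj_phi_iff' hm hru1 hru2 hrv1 hrv2] at huv'
  rcases huv' with ⟨hpp, hrr⟩ | hcross
  · -- internal edge of the copy at `pu`
    subst hpp
    set GA' := (patternGraph A') \ fromEdgeSet {s(⟨ru, hru⟩, ⟨rv, hrv⟩)} with hGA'
    set ent := entrySq m' iV jH pu with hent
    set GV := avoidVtx (patternGraph W) ⟨pu, hpu⟩ with hGV
    have hAadj : (patternGraph A').Adj ⟨ru, hru⟩ ⟨rv, hrv⟩ := hrr
    refine isBridge_of_invariant huv
      (fun q => IBody A' W GA' ⟨ru, hru⟩ ent GV pu (pQ m' ↑q) (rQ m' ↑q)) ?_ ?_ ?_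
    · -- invariance across all other edges
      intro a b hab hne_s
      obtain ⟨pa, ra, hpa, hra, ha1, -, -⟩ := subst_decomp hm hA a.2
      obtain ⟨pb, rb, hpb, hrb, hb1, -, -⟩ := subst_decomp hm hA b.2
      obtain ⟨hra1, hra2⟩ := hA ra hra
      obtain ⟨hrb1, hrb2⟩ := hA rb hrb
      have hab' : SideAdj (phi m' pa ra) (phi m' pb rb) := by
        rw [← ha1, ← hb1]; exact hab
      rw [sideAdj_phi_iff' hm hra1 hra2 hrb1 hrb2] at hab'
      beta_reduce
      rw [pQ_eq hm ha1 hra1 hra2, rQ_eq hm ha1 hra1 hra2,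
          pQ_eq hm hb1 hrb1 hrb2, rQ_eq hm hb1 hrb1 hrb2]
      -- a helper: a crossing edge incident to the copy at `pu`
      have crossIff : ∀ pd rc rd : ℕ × ℕ, pd ∈ W → rd ∈ A' → pd ≠ pu →
          SideAdj pd pu → rc = ent pd → rc ∈ A' →
          (IBody A' W GA' ⟨ru, hru⟩ ent GV pu pu rc ↔
            IBody A' W GA' ⟨ru, hru⟩ ent GV pu pd rd) := by
        intro pd rc rd hpd hrd hne hSA hrc hrcA
        unfold IBody
        constructor
        · rintro (⟨-, hrc', hre⟩ | ⟨hfalse, -⟩)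
          · refine Or.inr ⟨hne, pd, hpd, hpd, hrc ▸ hrcA, hSA, Reachable.refl _, ?_⟩
            have he : (⟨ent pd, hrc ▸ hrcA⟩ : ↥A') = ⟨rc, hrc'⟩ := Subtype.ext hrc.symm
            rw [he]; exact hre
          · exact absurd rfl hfalse
        · rintro (⟨hfalse, -⟩ | ⟨-, p₁, hpd', hp1, hent1, hSA1, hrv1', hre⟩)
          · exact absurd hfalse hne
          · have heq : (⟨pd, hpd'⟩ : ↥W) = ⟨p₁, hp1⟩ :=
              unique_attach hWac (p := ⟨pu, hpu⟩) hSA (by exact hSA1) hrv1'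
            have heq2 : pd = p₁ := congrArg Subtype.val heq
            subst heq2
            subst hrc
            exact Or.inl ⟨rfl, hent1, hre⟩
      rcases hab' with ⟨hqq, hss⟩ | hcr
      · -- same copy
        subst hqq
        by_cases hpau : pa = pu
        · subst hpau
          unfold IBody
          have hGadj : GA'.Adj ⟨ra, hra⟩ ⟨rb, hrb⟩ := by
            rw [hGA', sdiff_adj, fromEdgeSet_adj]
            refine ⟨hss, fun hh => ?_⟩
            have := Set.mem_singleton_iff.mp hh.1
            rw [Sym2.eq_iff] at this
            rcases this with ⟨h1, h2⟩ | ⟨h1, h2⟩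
            · have e1 : ra = ru := congrArg Subtype.val h1
              have e2 : rb = rv := congrArg Subtype.val h2
              apply hne_s
              have : a = u := Subtype.ext (by rw [ha1, hu1, e1])
              have hb : b = v := Subtype.ext (by rw [hb1, hv1, e2])
              rw [this, hb]
            · have e1 : ra = rv := congrArg Subtype.val h1
              have e2 : rb = ru := congrArg Subtype.val h2
              apply hne_s
              have hav : a = v := Subtype.ext (by rw [ha1, hv1, e1])
              have hbu : b = u := Subtype.ext (by rw [hb1, hu1, e2])
              rw [hav, hbu, Sym2.eq_swap]
          constructor
          · rintro (⟨-, hra', hre⟩ | ⟨hfalse, -⟩)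
            · refine Or.inl ⟨rfl, hrb, ?_⟩
              have he : (⟨ra, hra'⟩ : ↥A') = ⟨ra, hra⟩ := rfl
              exact (he ▸ hre).trans hGadj.reachable
            · exact absurd rfl hfalse
          · rintro (⟨-, hrb', hre⟩ | ⟨hfalse, -⟩)
            · refine Or.inl ⟨rfl, hra, ?_⟩
              have he : (⟨rb, hrb'⟩ : ↥A') = ⟨rb, hrb⟩ := rfl
              exact (he ▸ hre).trans hGadj.symm.reachable
            · exact absurd rfl hfalse
        · unfold IBody
          constructor
          · rintro (⟨hfalse, -⟩ | ⟨-, rest⟩)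
            · exact absurd hfalse hpau
            · exact Or.inr ⟨hpau, rest⟩
          · rintro (⟨hfalse, -⟩ | ⟨-, rest⟩)
            · exact absurd hfalse hpau
            · exact Or.inr ⟨hpau, rest⟩
      · -- crossing edge
        obtain ⟨hadjW, hea, heb⟩ := cross_entry hiVu hjHu hra hrb hcr
        have hne' : pa ≠ pb := crossData_ne hcr
        by_cases h1 : pa = pu
        · subst h1
          exact crossIff pb ra rb hpb hrb (fun hh => hne' hh.symm)
            (sideAdj_symm hadjW) hea hra
        · by_cases h2 : pb = pu
          · subst h2
            exact (crossIff pa rb ra hpa hra h1 hadjW heb hrb).symm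
          · -- neither copy is the centre
            have havoid : GV.Adj ⟨pa, hpa⟩ ⟨pb, hpb⟩ := by
              rw [hGV]
              exact ⟨hadjW, fun hh => h1 (congrArg Subtype.val hh),
                fun hh => h2 (congrArg Subtype.val hh)⟩
            unfold IBody
            constructor
            · rintro (⟨hfalse, -⟩ | ⟨-, p₁, hpa', hp1, hent1, hSA1, hrv1', hre⟩)
              · exact absurd hfalse h1
              · exact Or.inr ⟨h2, p₁, hpb, hp1, hent1, hSA1,
                  (havoid.symm.reachable).trans hrv1', hre⟩
            · rintro (⟨hfalse, -⟩ | ⟨-, p₁, hpb', hp1, hent1, hSA1, hrv1', hre⟩)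
              · exact absurd hfalse h2
              · exact Or.inr ⟨h1, p₁, hpa, hp1, hent1, hSA1,
                  (havoid.reachable).trans hrv1', hre⟩
    · -- the invariant holds at u
      beta_reduce
      rw [pQ_eq hm hu1 hru1 hru2, rQ_eq hm hu1 hru1 hru2]
      exact Or.inl ⟨rfl, hru, Reachable.refl _⟩
    · -- the invariant fails at v
      beta_reduce
      rw [pQ_eq hm hv1 hrv1 hrv2, rQ_eq hm hv1 hrv1 hrv2]
      rintro (⟨-, hrv', hre⟩ | ⟨hfalse, -⟩)
      · exact acyclic_not_reach_delete hAac hAadj hre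
      · exact absurd rfl hfalse
  · -- crossing edge between the copies at `pu` and `pv`
    obtain ⟨hadjW, heu, hev⟩ := cross_entry hiVu hjHu hru hrv hcross
    have hWadj : (patternGraph W).Adj ⟨pu, hpu⟩ ⟨pv, hpv⟩ := hadjW
    set GW' := (patternGraph W) \ fromEdgeSet {s((⟨pu, hpu⟩ : ↥W), ⟨pv, hpv⟩)} with hGW'
    refine isBridge_of_invariant huv
      (fun q => XBody W GW' ⟨pu, hpu⟩ (pQ m' ↑q)) ?_ ?_ ?_
    · intro a b hab hne_s
      obtain ⟨pa, ra, hpa, hra, ha1, -, -⟩ := subst_decomp hm hA a.2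
      obtain ⟨pb, rb, hpb, hrb, hb1, -, -⟩ := subst_decomp hm hA b.2
      obtain ⟨hra1, hra2⟩ := hA ra hra
      obtain ⟨hrb1, hrb2⟩ := hA rb hrb
      have hab' : SideAdj (phi m' pa ra) (phi m' pb rb) := by
        rw [← ha1, ← hb1]; exact hab
      rw [sideAdj_phi_iff' hm hra1 hra2 hrb1 hrb2] at hab'
      beta_reduce
      rw [pQ_eq hm ha1 hra1 hra2, pQ_eq hm hb1 hrb1 hrb2]
      rcases hab' with ⟨hqq, -⟩ | hcr
      · subst hqq; rfl
      · obtain ⟨hadjW2, hea, heb⟩ := cross_entry hiVu hjHu hra hrb hcr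
        have hkey : s((⟨pa, hpa⟩ : ↥W), (⟨pb, hpb⟩ : ↥W)) ≠
            s((⟨pu, hpu⟩ : ↥W), ⟨pv, hpv⟩) := by
          intro hh
          rw [Sym2.eq_iff] at hh
          apply hne_s
          rcases hh with ⟨h1, h2⟩ | ⟨h1, h2⟩
          · have e1 : pa = pu := congrArg Subtype.val h1
            have e2 : pb = pv := congrArg Subtype.val h2
            have era : ra = ru := by rw [hea, e1, e2, ← heu]
            have erb : rb = rv := by rw [heb, e1, e2, ← hev]
            have hau : a = u := Subtype.ext (by rw [ha1, hu1, e1, era])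
            have hbv : b = v := Subtype.ext (by rw [hb1, hv1, e2, erb])
            rw [hau, hbv]
          · have e1 : pa = pv := congrArg Subtype.val h1
            have e2 : pb = pu := congrArg Subtype.val h2
            have era : ra = rv := by rw [hea, e1, e2, ← hev]
            have erb : rb = ru := by rw [heb, e1, e2, ← heu]
            have hav : a = v := Subtype.ext (by rw [ha1, hv1, e1, era])
            have hbu : b = u := Subtype.ext (by rw [hb1, hu1, e2, erb])
            rw [hav, hbu, Sym2.eq_swap]
        have hGWadj : GW'.Adj ⟨pa, hpa⟩ ⟨pb, hpb⟩ := by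
          rw [hGW', sdiff_adj, fromEdgeSet_adj]
          exact ⟨hadjW2, fun hh => hkey (Set.mem_singleton_iff.mp hh.1)⟩
        unfold XBody
        constructor
        · rintro ⟨hpa', hre⟩
          exact ⟨hpb, (hGWadj.symm.reachable).trans hre⟩
        · rintro ⟨hpb', hre⟩
          exact ⟨hpa, (hGWadj.reachable).trans hre⟩
    · beta_reduce
      rw [pQ_eq hm hu1 hru1 hru2]
      exact ⟨hpu, Reachable.refl _⟩
    · beta_reduce
      rw [pQ_eq hm hv1 hrv1 hrv2]
      rintro ⟨hpv', hre⟩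
      exact acyclic_not_reach_delete hWac hWadj hre.symm

lemma max_block {M : ℕ} (hM : 0 < M) (hm : 0 < m') :
    (M - 1) * m' + (m' - 1) = M * m' - 1 := by
  have h1 : m' ≤ M * m' := Nat.le_mul_of_pos_left m' hM
  rw [Nat.sub_one_mul]
  omega

lemma top_decomp {M x y : ℕ} (hm : 0 < m') (hM : 0 < M) (hy : y < m')
    (h : x * m' + y = M * m' - 1) : x = M - 1 ∧ y = m' - 1 := by
  rw [← max_block hM hm] at h
  have := (blockL1 hm hy (by omega)).mp h
  omega

lemma zero_decomp {x y : ℕ} (hm : 0 < m') (h : x * m' + y = 0) : x = 0 ∧ y = 0 := by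
  have h1 : x * m' = 0 ∧ y = 0 := by omega
  rcases Nat.mul_eq_zero.mp h1.1 with h2 | h2
  · exact ⟨h2, h1.2⟩
  · omega

open SimpleGraph in
lemma subst_lab {M : ℕ} (hA : IsLabyrinthPattern m' A') (hW : IsLabyrinthPattern M W) :
    IsLabyrinthPattern (M * m') (subst m' A' W) := by
  obtain ⟨hm3, ⟨hAne, hAbd⟩, hAtree, hAV, hAH, hAc1, hAc2⟩ := hA
  obtain ⟨hM3, ⟨hWne, hWbd⟩, hWtree, hWV, hWH, hWc1, hWc2⟩ := hW
  have hm : 0 < m' := by omega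
  have hM : 0 < M := by omega
  obtain ⟨iA, ⟨hiA1, hiA0⟩, hiAu⟩ := hAV
  obtain ⟨jA, ⟨hjA0, hjA1⟩, hjAu⟩ := hAH
  obtain ⟨iW, ⟨hiW1, hiW0⟩, hiWu⟩ := hWV
  obtain ⟨jW, ⟨hjW0, hjW1⟩, hjWu⟩ := hWH
  have hAbd' : ∀ r ∈ A', r.1 < m' ∧ r.2 < m' := hAbd
  refine ⟨?_, ⟨?_, ?_⟩, ⟨?_, ?_⟩, ?_, ?_, ?_, ?_⟩
  · -- 3 ≤ M * m'
    have : M ≤ M * m' := Nat.le_mul_of_pos_right M hm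
    omega
  · -- nonempty
    obtain ⟨w, hw⟩ := hWne
    obtain ⟨r, hr⟩ := hAne
    exact ⟨phi m' w r, phi_mem_subst hw hr⟩
  · -- bounds
    intro q hq
    obtain ⟨p, r, hp, hr, rfl, -, -⟩ := subst_decomp hm hAbd' hq
    obtain ⟨b1, b2⟩ := hWbd p hp
    obtain ⟨c1, c2⟩ := hAbd' r hr
    constructor
    · have h1 : p.1 * m' + r.1 < (p.1 + 1) * m' := by rw [add_one_mul]; omega
      exact lt_of_lt_of_le h1 (Nat.mul_le_mul_right m' (by omega))
    · have h1 : p.2 * m' + r.2 < (p.2 + 1) * m' := by rw [add_one_mul]; omega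
      exact lt_of_lt_of_le h1 (Nat.mul_le_mul_right m' (by omega))
  · -- connected
    exact subst_connected hm hAbd' hiA1 hiA0 hjA0 hjA1 hAtree.1 hWtree.1
  · -- acyclic
    exact subst_acyclic hm hAbd' (fun i hi => hiAu i hi) (fun j hj => hjAu j hj)
      hAtree.2 hWtree.2
  · -- unique vertical exit pair
    refine ⟨iW * m' + iA, ⟨?_, ?_⟩, ?_⟩
    · have he : ((iW * m' + iA, M * m' - 1) : ℕ × ℕ) = phi m' (iW, M - 1) (iA, m' - 1) := by
        unfold phi; dsimp
        rw [max_block hM hm]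
      rw [he]; exact phi_mem_subst hiW1 hiA1
    · have he : ((iW * m' + iA, 0) : ℕ × ℕ) = phi m' (iW, 0) (iA, 0) := by
        simp [phi]
      rw [he]; exact phi_mem_subst hiW0 hiA0
    · rintro I ⟨hI1, hI0⟩
      obtain ⟨p1, r1, hp1, hr1, he1, -, -⟩ := subst_decomp hm hAbd' hI1
      obtain ⟨p0, r0, hp0, hr0, he0, -, -⟩ := subst_decomp hm hAbd' hI0
      rw [Prod.ext_iff] at he1 he0
      unfold phi at he1 he0; dsimp at he1 he0
      obtain ⟨ht1, ht2⟩ := top_decomp hm hM (hAbd' r1 hr1).2 he1.2.symm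
      obtain ⟨hz1, hz2⟩ := zero_decomp hm he0.2.symm
      obtain ⟨hc1', hc2'⟩ := (blockL1 hm (hAbd' r1 hr1).1 (hAbd' r0 hr0).1).mp
        (he1.1.symm.trans he0.1)
      have hmem1 : (p1.1, M - 1) ∈ W := by
        have : (p1.1, M - 1) = p1 := Prod.ext rfl ht1.symm
        rw [this]; exact hp1
      have hmem0 : (p1.1, 0) ∈ W := by
        have : (p1.1, 0) = p0 := Prod.ext hc1' hz1.symm
        rw [this]; exact hp0
      have hmem1' : (r1.1, m' - 1) ∈ A' := by
        have : (r1.1, m' - 1) = r1 := Prod.ext rfl ht2.symm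
        rw [this]; exact hr1
      have hmem0' : (r1.1, 0) ∈ A' := by
        have : (r1.1, 0) = r0 := Prod.ext hc2' hz2.symm
        rw [this]; exact hr0
      have e1 : p1.1 = iW := hiWu p1.1 ⟨hmem1, hmem0⟩
      have e2 : r1.1 = iA := hiAu r1.1 ⟨hmem1', hmem0'⟩
      rw [he1.1, e1, e2]
  · -- unique horizontal exit pair
    refine ⟨jW * m' + jA, ⟨?_, ?_⟩, ?_⟩
    · have he : ((0, jW * m' + jA) : ℕ × ℕ) = phi m' (0, jW) (0, jA) := by
        simp [phi]
      rw [he]; exact phi_mem_subst hjW0 hjA0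
    · have he : ((M * m' - 1, jW * m' + jA) : ℕ × ℕ) = phi m' (M - 1, jW) (m' - 1, jA) := by
        unfold phi; dsimp
        rw [max_block hM hm]
      rw [he]; exact phi_mem_subst hjW1 hjA1
    · rintro J ⟨hJ0, hJ1⟩
      obtain ⟨p0, r0, hp0, hr0, he0, -, -⟩ := subst_decomp hm hAbd' hJ0
      obtain ⟨p1, r1, hp1, hr1, he1, -, -⟩ := subst_decomp hm hAbd' hJ1
      rw [Prod.ext_iff] at he1 he0
      unfold phi at he1 he0; dsimp at he1 he0
      obtain ⟨ht1, ht2⟩ := top_decomp hm hM (hAbd' r1 hr1).1 he1.1.symm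
      obtain ⟨hz1, hz2⟩ := zero_decomp hm he0.1.symm
      obtain ⟨hc1', hc2'⟩ := (blockL1 hm (hAbd' r1 hr1).2 (hAbd' r0 hr0).2).mp
        (he1.2.symm.trans he0.2)
      have hmem1 : (M - 1, p1.2) ∈ W := by
        have : (M - 1, p1.2) = p1 := Prod.ext ht1.symm rfl
        rw [this]; exact hp1
      have hmem0 : (0, p1.2) ∈ W := by
        have : (0, p1.2) = p0 := Prod.ext hz1.symm hc1'
        rw [this]; exact hp0
      have hmem1' : (m' - 1, r1.2) ∈ A' := by
        have : (m' - 1, r1.2) = r1 := Prod.ext ht2.symm rfl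
        rw [this]; exact hr1
      have hmem0' : (0, r1.2) ∈ A' := by
        have : (0, r1.2) = r0 := Prod.ext hz2.symm hc2'
        rw [this]; exact hr0
      have e1 : p1.2 = jW := hjWu p1.2 ⟨hmem0, hmem1⟩
      have e2 : r1.2 = jA := hjAu r1.2 ⟨hmem0', hmem1'⟩
      rw [he1.2, e1, e2]
  · -- corner condition 1
    intro h0 hK
    obtain ⟨p, r, hp, hr, he, -, -⟩ := subst_decomp hm hAbd' h0
    obtain ⟨p', r', hp', hr', he', -, -⟩ := subst_decomp hm hAbd' hK
    rw [Prod.ext_iff] at he he'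
    unfold phi at he he'; dsimp at he he'
    obtain ⟨a1, -⟩ := zero_decomp hm he.1.symm
    obtain ⟨a2, -⟩ := zero_decomp hm he.2.symm
    obtain ⟨b1, -⟩ := top_decomp hm hM (hAbd' r' hr').1 he'.1.symm
    obtain ⟨b2, -⟩ := top_decomp hm hM (hAbd' r' hr').2 he'.2.symm
    have hmem0 : ((0, 0) : ℕ × ℕ) ∈ W := by
      have : ((0, 0) : ℕ × ℕ) = p := Prod.ext a1.symm a2.symm
      rw [this]; exact hp
    have hmemK : ((M - 1, M - 1) : ℕ × ℕ) ∈ W := by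
      have : ((M - 1, M - 1) : ℕ × ℕ) = p' := Prod.ext b1.symm b2.symm
      rw [this]; exact hp'
    exact hWc1 hmem0 hmemK
  · -- corner condition 2
    intro h0 hK
    obtain ⟨p, r, hp, hr, he, -, -⟩ := subst_decomp hm hAbd' h0
    obtain ⟨p', r', hp', hr', he', -, -⟩ := subst_decomp hm hAbd' hK
    rw [Prod.ext_iff] at he he'
    unfold phi at he he'; dsimp at he he'
    obtain ⟨a1, -⟩ := top_decomp hm hM (hAbd' r hr).1 he.1.symm
    obtain ⟨a2, -⟩ := zero_decomp hm he.2.symm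
    obtain ⟨b1, -⟩ := zero_decomp hm he'.1.symm
    obtain ⟨b2, -⟩ := top_decomp hm hM (hAbd' r' hr').2 he'.2.symm
    have hmem0 : ((M - 1, 0) : ℕ × ℕ) ∈ W := by
      have : ((M - 1, 0) : ℕ × ℕ) = p := Prod.ext a1.symm a2.symm
      rw [this]; exact hp
    have hmemK : ((0, M - 1) : ℕ × ℕ) ∈ W := by
      have : ((0, M - 1) : ℕ × ℕ) = p' := Prod.ext b1.symm b2.symm
      rw [this]; exact hp'
    exact hWc2 hmem0 hmemK

end Subst

end Labyrinth
open Labyrinth in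
/-- If `𝒜_1, …, 𝒜_n` are labyrinth patterns, then `𝒲_n`, regarded as an
`m(n)`-pattern, is a mixed labyrinth set, i.e. satisfies properties (1)–(3) of labyrinth
patterns. -/
theorem whites_isLabyrinthPattern (m : ℕ → ℕ) (A : ℕ → Set (ℕ × ℕ))
    (hm : ∀ k, 3 ≤ m k) (hpat : ∀ k, IsPattern (m k) (A k))
    (n : ℕ) (hn : 1 ≤ n) (hlab : ∀ k < n, IsLabyrinthPattern (m k) (A k)) :
    IsLabyrinthPattern (mProd m n) (whites m A n) := by
  revert hn hlab
  induction n with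
  | zero => intro hn _; omega
  | succ n ih =>
    intro _ hlab
    by_cases hn0 : n = 0
    · subst hn0
      have h0 := hlab 0 (by omega)
      have hwh : whites m A 1 = A 0 := by
        ext q
        constructor
        · rintro ⟨p, hp, r, hr, rfl⟩
          have hp' : p = ((0 : ℕ), (0 : ℕ)) := hp
          subst hp'
          simpa using hr
        · intro hq
          exact ⟨(0, 0), rfl, q, hq, by simp⟩
      have hmp : mProd m 1 = m 0 := by simp [mProd]
      rw [hwh, hmp]
      exact h0
    · have ih' := ih (by omega) (fun k hk => hlab k (by omega))
      have hmp : mProd m (n + 1) = mProd m n * m n := Finset.prod_range_succ m n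
      rw [hmp]
      exact subst_lab (hlab n (by omega)) ih'
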